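/- Let f, g be nonnegative measurable functions, c > 0, and suppose there exists a set A* of the form A* = {x : g(x) < t_c·f(x)} ∪ M_c with t_c ≥ 0 and M_c ⊆ {x : g(x) = t_c·f(x)}, such that ∫_{A*} f dμ = c. Then for every measurable set A with ∫_A f dμ = c, one has ∫_{A*} g dμ ≤ ∫_A g dμ. -/
import Mathlib


open MeasureTheory Set

/-- Constrained minimization lemma: if `A* = {g < t·f} ∪ M` with `M ⊆ {g = t·f}`
satisfies `∫_{A*} f = c`, then `A*` minimizes `∫_A g` among all measurable sets `A`
with `∫_A f = c`. -/
theorem constrained_min {𝓧 : Type*} [MeasurableSpace 𝓧]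
    (μ : Measure 𝓧) (f g : 𝓧 → ℝ) (c : ℝ) (hc : 0 < c)
    (hf : Measurable f) (hg : Measurable g)
    (hf0 : ∀ x, 0 ≤ f x) (hg0 : ∀ x, 0 ≤ g x)
    (hfi : Integrable f μ) (hgi : Integrable g μ)
    (t : ℝ) (ht : 0 ≤ t)
    (M : Set 𝓧) (hM : MeasurableSet M) (hMsub : M ⊆ {x | g x = t * f x})
    (hAstar : ∫ x in ({x | g x < t * f x} ∪ M), f x ∂μ = c) :
    ∀ A : Set 𝓧, MeasurableSet A → (∫ x in A, f x ∂μ) = c →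
      (∫ x in ({x | g x < t * f x} ∪ M), g x ∂μ) ≤ ∫ x in A, g x ∂μ := by
  intro A hA hAc
  set S : Set 𝓧 := {x | g x < t * f x} ∪ M with hS
  have hSm : MeasurableSet S := (measurableSet_lt hg (hf.const_mul t)).union hM
  have hfiS : IntegrableOn f S μ := hfi.integrableOn
  have hfiA : IntegrableOn f A μ := hfi.integrableOn
  have hgiS : IntegrableOn g S μ := hgi.integrableOn
  have hgiA : IntegrableOn g A μ := hgi.integrableOn
  -- split integrals
  have hsplitSf : (∫ x in S ∩ A, f x ∂μ) + ∫ x in S \ A, f x ∂μ = ∫ x in S, f x ∂μ :=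
    integral_inter_add_diff hA hfiS
  have hsplitAf : (∫ x in A ∩ S, f x ∂μ) + ∫ x in A \ S, f x ∂μ = ∫ x in A, f x ∂μ :=
    integral_inter_add_diff hSm hfiA
  have hsplitSg : (∫ x in S ∩ A, g x ∂μ) + ∫ x in S \ A, g x ∂μ = ∫ x in S, g x ∂μ :=
    integral_inter_add_diff hA hgiS
  have hsplitAg : (∫ x in A ∩ S, g x ∂μ) + ∫ x in A \ S, g x ∂μ = ∫ x in A, g x ∂μ :=
    integral_inter_add_diff hSm hgiA
  have hcomm : S ∩ A = A ∩ S := Set.inter_comm S A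
  have hfeq : (∫ x in S \ A, f x ∂μ) = ∫ x in A \ S, f x ∂μ := by
    have h1 : (∫ x in S ∩ A, f x ∂μ) + ∫ x in S \ A, f x ∂μ = c := by rw [hsplitSf]; exact hAstar
    have h2 : (∫ x in S ∩ A, f x ∂μ) + ∫ x in A \ S, f x ∂μ = c := by
      rw [hcomm, hsplitAf]; exact hAc
    linarith
  -- on S \ A : g ≤ t * f
  have hle1 : (∫ x in S \ A, g x ∂μ) ≤ t * ∫ x in S \ A, f x ∂μ := by
    rw [← integral_const_mul]
    apply setIntegral_mono_on hgi.integrableOn ((hfi.const_mul t).integrableOn)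
      (hSm.diff hA)
    intro x hx
    rcases hx.1 with h | h
    · exact le_of_lt h
    · exact le_of_eq (hMsub h)
  -- on A \ S : t * f ≤ g
  have hle2 : t * (∫ x in A \ S, f x ∂μ) ≤ ∫ x in A \ S, g x ∂μ := by
    rw [← integral_const_mul]
    apply setIntegral_mono_on ((hfi.const_mul t).integrableOn) hgi.integrableOn
      (hA.diff hSm)
    intro x hx
    have : x ∉ {x | g x < t * f x} := fun h => hx.2 (Or.inl h)
    exact le_of_not_gt this
  calc (∫ x in S, g x ∂μ)
      = (∫ x in S ∩ A, g x ∂μ) + ∫ x in S \ A, g x ∂μ := hsplitSg.symm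
    _ ≤ (∫ x in S ∩ A, g x ∂μ) + t * ∫ x in S \ A, f x ∂μ := by linarith
    _ = (∫ x in A ∩ S, g x ∂μ) + t * ∫ x in A \ S, f x ∂μ := by rw [hcomm, hfeq]
    _ ≤ (∫ x in A ∩ S, g x ∂μ) + ∫ x in A \ S, g x ∂μ := by linarith
    _ = ∫ x in A, g x ∂μ := hsplitAg
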